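/- Projection lemma: let \tau \subset Z^n_{\ge 0} be a B-facet, E a coordinate subspace such that E \cap \tau is a V-face of \tau (of dimension dim(E) - 1, spanning a simplex in E whose affine span avoids the origin of E^\perp directions) but is not a B-face, i.e., there exists a (dim(E)-1)-dimensional simplex Q_E with vertices in E \cap \tau that is not a B-simplex. Then the projection p_E(\tau) of \tau along E onto the complementary coordinate subspace E^\perp is a B-polytope in E^\perp: every (n - dim(E) - 1)-dimensional simplex with vertices in p_E(\tau) is either a B-simplex or has affine span containing the origin. -/

import Mathlib

/-- Cast an integer lattice point to a rational point. -/
def toQ {n : ℕ} (v : Fin n → ℤ) : Fin n → ℚ := fun i => (v i : ℚ)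

/-- An (n-1)-dimensional B-simplex in `ℤⁿ_{≥0}` (given by its `n` vertices): a pyramid of
lattice height 1 with base on a coordinate hyperplane. -/
def IsBSimplexN {n : ℕ} (v : Fin n → (Fin n → ℤ)) : Prop :=
  ∃ i : Fin n, ∃ a : Fin n, v a i = 1 ∧ ∀ b : Fin n, b ≠ a → v b i = 0

/-- A B-facet in `ℤⁿ_{≥0}`. -/
def IsBFacetN {n : ℕ} (S : Finset (Fin n → ℤ)) : Prop :=
  (∀ p ∈ S, ∀ i, 0 ≤ p i) ∧
  (∃ a : Fin n → ℤ, (∀ i, 0 < a i) ∧ ∃ b : ℤ, ∀ p ∈ S, (∑ i, a i * p i) = b) ∧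
  (∃ v : Fin n → (Fin n → ℤ), (∀ j, v j ∈ S) ∧ AffineIndependent ℚ (fun j => toQ (v j))) ∧
  (∀ v : Fin n → (Fin n → ℤ), (∀ j, v j ∈ S) →
    AffineIndependent ℚ (fun j => toQ (v j)) → IsBSimplexN v)

/-- The projection along the coordinate subspace `E` spanned by the coordinates in `I`,
onto the complementary coordinate subspace (the `I`-coordinates are set to `0`). -/
def projAlong {n : ℕ} (I : Finset (Fin n)) (p : Fin n → ℤ) : Fin n → ℤ :=
  fun j => if j ∈ I then 0 else p j

lemma dep_of_small_support {n k : ℕ} (J : Finset (Fin n)) (f : Fin k → (Fin n → ℚ))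
    (hcard : J.card < k) (hsupp : ∀ a j, j ∉ J → f a j = 0) :
    ∃ c : Fin k → ℚ, (∑ a, c a • f a) = 0 ∧ ∃ a, c a ≠ 0 := by
  classical
  let ψ : ((↥J) → ℚ) →ₗ[ℚ] (Fin n → ℚ) :=
    { toFun := fun y j => if h : j ∈ J then y ⟨j, h⟩ else 0
      map_add' := by intro x y; funext j; by_cases h : j ∈ J <;> simp [h]
      map_smul' := by intro c x; funext j; by_cases h : j ∈ J <;> simp [h] }
  let g : Fin k → ((↥J) → ℚ) := fun a j => f a j
  have hfg : ∀ a, ψ (g a) = f a := by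
    intro a; funext j
    by_cases h : j ∈ J
    · simp [ψ, g, h]
    · simp [ψ, g, h, hsupp a j h]
  have hnli : ¬ LinearIndependent ℚ g := by
    intro hli
    have hle := hli.fintype_card_le_finrank
    rw [Module.finrank_pi] at hle
    simp only [Fintype.card_fin, Fintype.card_coe] at hle
    omega
  rw [Fintype.not_linearIndependent_iff] at hnli
  obtain ⟨c, hc, a, hca⟩ := hnli
  refine ⟨c, ?_, a, hca⟩
  have h2 := congrArg ψ hc
  rw [map_sum, map_zero] at h2
  simpa [map_smul, hfg] using h2

/-- projection lemma: let `τ ⊆ ℤⁿ_{≥0}` be a B-facet and `E` the coordinate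
subspace spanned by the coordinates in `I` (with `k = |I| = dim E`). Suppose `E ∩ τ`
contains a `(k-1)`-dimensional simplex `QE` that is not a B-simplex (so `E ∩ τ` is a
V-face but not a B-face). Then `p_E(τ)` is a B-polytope in `E^⊥`: every
`(n-k-1)`-dimensional simplex with vertices in `p_E(τ)` is either a B-simplex (in the
coordinates outside `I`) or has affine span containing the origin. -/
theorem stmt9 {n : ℕ} (S : Finset (Fin n → ℤ)) (hS : IsBFacetN S)
    (I : Finset (Fin n)) (k : ℕ) (hk : k = I.card)
    (QE : Fin k → (Fin n → ℤ)) (hQEmem : ∀ a, QE a ∈ S)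
    (hQEsupp : ∀ a, ∀ j, j ∉ I → QE a j = 0)
    (hQEind : AffineIndependent ℚ (fun a => toQ (QE a)))
    (hQEnotB : ¬ ∃ i ∈ I, ∃ a, QE a i = 1 ∧ ∀ b, b ≠ a → QE b i = 0) :
    ∀ w : Fin (n - k) → (Fin n → ℤ),
      (∀ a, ∃ p ∈ S, w a = projAlong I p) →
      AffineIndependent ℚ (fun a => toQ (w a)) →
      (∃ i, i ∉ I ∧ ∃ a, w a i = 1 ∧ ∀ b, b ≠ a → w b i = 0) ∨
        (0 : Fin n → ℚ) ∈ affineSpan ℚ (Set.range (fun a => toQ (w a))) := by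
  classical
  intro w hw hwind
  by_cases h0 : (0 : Fin n → ℚ) ∈ affineSpan ℚ (Set.range (fun a => toQ (w a)))
  · exact Or.inr h0
  obtain ⟨hSnn, ⟨av, havpos, b, hb⟩, ⟨vex, hvexS, hvexind⟩, hBall⟩ := hS
  choose p hpS hpw using hw
  have hkn : k ≤ n := by
    rw [hk]
    calc I.card ≤ Finset.univ.card := Finset.card_le_univ I
    _ = n := by simp
  have hadd : k + (n - k) = n := by omega
  let σ : (Fin k ⊕ Fin (n - k)) ≃ Fin n := finSumFinEquiv.trans (finCongr hadd)
  -- projection linear map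
  let π : (Fin n → ℚ) →ₗ[ℚ] (Fin n → ℚ) :=
    { toFun := fun x j => if j ∈ I then 0 else x j
      map_add' := by intro x y; funext j; by_cases h : j ∈ I <;> simp [h]
      map_smul' := by intro c x; funext j; by_cases h : j ∈ I <;> simp [h] }
  have hπQE : ∀ a, π (toQ (QE a)) = 0 := by
    intro a; funext j
    by_cases h : j ∈ I
    · simp [π, h]
    · simp [π, h, toQ, hQEsupp a j h]
  have hπp : ∀ r, π (toQ (p r)) = toQ (w r) := by
    intro r; funext j
    by_cases h : j ∈ I <;> simp [π, h, toQ, hpw r, projAlong]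
  -- the combined family is affinely independent
  have hfind : AffineIndependent ℚ (fun s : Fin k ⊕ Fin (n - k) => toQ (Sum.elim QE p s)) := by
    rw [affineIndependent_iff_of_fintype]
    intro c hc0 hcv
    rw [Finset.weightedVSub_eq_linear_combination _ hc0] at hcv
    rw [Fintype.sum_sum_type] at hc0 hcv
    simp only [Sum.elim_inl, Sum.elim_inr] at hcv
    have hπv := congrArg π hcv
    rw [map_add, map_sum, map_sum, map_zero] at hπv
    simp only [map_smul, hπQE, hπp, smul_zero, Finset.sum_const_zero, zero_add] at hπv
    -- hπv : ∑ r, c (.inr r) • toQ (w r) = 0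
    set t : ℚ := ∑ r, c (Sum.inr r) with ht
    by_cases hts : t = 0
    · have hr0 : ∀ r, c (Sum.inr r) = 0 := fun r =>
        hwind.eq_zero_of_sum_eq_zero hts hπv r (Finset.mem_univ r)
      have hl0 : ∀ a, c (Sum.inl a) = 0 := by
        have hcl : ∑ a, c (Sum.inl a) = 0 := by
          have : t = 0 := hts
          rw [this] at hc0; simpa using hc0
        have hclv : ∑ a, c (Sum.inl a) • toQ (QE a) = 0 := by
          rw [← hcv]; simp [hr0]
        exact fun a => hQEind.eq_zero_of_sum_eq_zero hcl hclv a (Finset.mem_univ a)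
      rintro (a | r)
      · exact hl0 a
      · exact hr0 r
    · exfalso
      apply h0
      have hd1 : ∑ r, c (Sum.inr r) / t = 1 := by
        rw [← Finset.sum_div, ← ht, div_self hts]
      have hmem := affineCombination_mem_affineSpan hd1 (fun a => toQ (w a))
      rw [Finset.affineCombination_eq_linear_combination _ _ _ hd1] at hmem
      have hz : ∑ r, (c (Sum.inr r) / t) • toQ (w r) = 0 := by
        have : ∑ r, (c (Sum.inr r) / t) • toQ (w r)
            = t⁻¹ • ∑ r, c (Sum.inr r) • toQ (w r) := by
          rw [Finset.smul_sum]
          exact Finset.sum_congr rfl fun r _ => by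
            rw [smul_smul, div_eq_inv_mul]
        rw [this, hπv, smul_zero]
      rwa [hz] at hmem
  have humem : ∀ j, Sum.elim QE p (σ.symm j) ∈ S := by
    intro j
    rcases σ.symm j with q | r
    · exact hQEmem q
    · exact hpS r
  have huind : AffineIndependent ℚ (fun j => toQ (Sum.elim QE p (σ.symm j))) :=
    hfind.comp_embedding σ.symm.toEmbedding
  obtain ⟨i, a0, ha0, hothers⟩ := hBall (fun j => Sum.elim QE p (σ.symm j)) humem huind
  simp only [] at ha0
  rcases hsa : σ.symm a0 with q | r
  · -- apex is a vertex of QE : contradiction with hQEnotB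
    rw [hsa, Sum.elim_inl] at ha0
    have hiI : i ∈ I := by
      by_contra hiI
      rw [hQEsupp q i hiI] at ha0; exact absurd ha0 (by norm_num)
    exfalso
    apply hQEnotB
    refine ⟨i, hiI, q, ha0, ?_⟩
    intro b' hb'
    have hne : σ (Sum.inl b') ≠ a0 := by
      intro h
      rw [← h, Equiv.symm_apply_apply] at hsa
      exact hb' (Sum.inl.inj hsa)
    have := hothers (σ (Sum.inl b')) hne
    simpa only [Equiv.symm_apply_apply, Sum.elim_inl] using this
  · rw [hsa, Sum.elim_inr] at ha0
    by_cases hiI : i ∈ I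
    · -- apex is a projected vertex but i ∈ I : derive b = 0 and contradiction
      exfalso
      have hQE0 : ∀ a, QE a i = 0 := by
        intro a
        have hne : σ (Sum.inl a) ≠ a0 := by
          intro h
          rw [← h, Equiv.symm_apply_apply] at hsa
          exact Sum.inl_ne_inr hsa
        have := hothers (σ (Sum.inl a)) hne
        simpa only [Equiv.symm_apply_apply, Sum.elim_inl] using this
      have hkpos : 0 < k := by
        rw [hk]; exact Finset.card_pos.2 ⟨i, hiI⟩
      obtain ⟨c, hc, a1, ha1⟩ := dep_of_small_support (I.erase i) (fun a => toQ (QE a))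
        (by rw [Finset.card_erase_of_mem hiI]; omega)
        (by
          intro a j hj
          by_cases hji : j = i
          · subst hji; simp [toQ, hQE0 a]
          · have : j ∉ I := by
              intro hjI; exact hj (Finset.mem_erase.2 ⟨hji, hjI⟩)
            simp [toQ, hQEsupp a j this])
      set t : ℚ := ∑ a, c a with htdef
      have ht : t ≠ 0 := by
        intro h
        exact ha1 (hQEind.eq_zero_of_sum_eq_zero h hc a1 (Finset.mem_univ a1))
      have hpt : ∀ j, ∑ a, c a * ((QE a j : ℤ) : ℚ) = 0 := by
        intro j
        have := congrFun hc j
        simpa [toQ, Finset.sum_apply] using this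
      have hrow : ∀ a, ∑ j, ((av j : ℚ)) * ((QE a j : ℚ)) = (b : ℚ) := by
        intro a
        have := hb (QE a) (hQEmem a)
        exact_mod_cast congrArg (fun z : ℤ => (z : ℚ)) this
      have key : t * (b : ℚ) = 0 := by
        have h1 : ∑ a, c a * (b : ℚ) = t * b := by rw [← Finset.sum_mul]
        have h2 : ∑ a, c a * (b : ℚ) = ∑ a, c a * ∑ j, (av j : ℚ) * (QE a j : ℚ) :=
          Finset.sum_congr rfl fun a _ => by rw [hrow a]
        have h3 : ∑ a, c a * ∑ j, (av j : ℚ) * (QE a j : ℚ)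
            = ∑ j, (av j : ℚ) * ∑ a, c a * (QE a j : ℚ) := by
          simp_rw [Finset.mul_sum]
          rw [Finset.sum_comm]
          exact Finset.sum_congr rfl fun j _ => Finset.sum_congr rfl fun a _ => by ring
        rw [← h1, h2, h3]
        simp [hpt]
      have hbQ : (b : ℚ) = 0 := (mul_eq_zero.1 key).resolve_left ht
      have hb0 : b = 0 := by exact_mod_cast hbQ
      have hall0 : ∀ q ∈ S, ∀ j, q j = 0 := by
        intro q hq j
        have hsum := hb q hq
        rw [hb0] at hsum
        have hnn : ∀ j' ∈ Finset.univ, 0 ≤ av j' * q j' :=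
          fun j' _ => mul_nonneg (havpos j').le (hSnn q hq j')
        have := (Finset.sum_eq_zero_iff_of_nonneg hnn).1 hsum j (Finset.mem_univ j)
        rcases mul_eq_zero.1 this with h | h
        · exact absurd h (havpos j).ne'
        · exact h
      rw [hall0 (p r) (hpS r) i] at ha0
      exact absurd ha0 (by norm_num)
    · -- apex is a projected vertex and i ∉ I : B-simplex
      refine Or.inl ⟨i, hiI, r, ?_, ?_⟩
      · rw [hpw r]; simp [projAlong, hiI, ha0]
      · intro b' hb'
        have hne : σ (Sum.inr b') ≠ a0 := by
          intro h
          rw [← h, Equiv.symm_apply_apply] at hsa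
          exact hb' (Sum.inr.inj hsa)
        have hh := hothers (σ (Sum.inr b')) hne
        simp only [Equiv.symm_apply_apply, Sum.elim_inr] at hh
        rw [hpw b']; simp [projAlong, hiI, hh]
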